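/- The language PALINDROMES over any finite alphabet Σ is recognizable by a generalized unique hard attention Transformer (GUHAT) with 2 layers and 1 head. -/

import Mathlib

open Classical in
/-- The leftmost position maximizing the attention scores `a` (unique hard attention). -/
noncomputable def leftmostArgmax {n : ℕ} (hn : 0 < n) (a : Fin n → ℝ) : Fin n :=
  have : Nonempty (Fin n) := ⟨⟨0, hn⟩⟩
  (Finset.univ.filter (fun j => ∀ l, a l ≤ a j)).min'
    (by
      obtain ⟨j, hj⟩ := Finite.exists_max a
      exact ⟨j, Finset.mem_filter.mpr ⟨Finset.mem_univ _, hj⟩⟩)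

/-- A generalized (unique hard attention) Transformer over alphabet `σ`, with `K` layers
and `H` heads: arbitrary activation values `A`, an input function `f` (taking the symbol,
which may be the end-of-sequence marker `$ = Sum.inr ()`, the position, and the input
length), real-valued attention functions for each layer `k ∈ [1..K]` and head
`h ∈ [1..H]`, activation functions for each layer, and a `{0,1}`-valued output
function `g`. -/
structure GT (σ : Type) where
  K : ℕ
  H : ℕ
  A : Type
  f : (σ ⊕ Unit) → ℕ → ℕ → A
  fatt : ℕ → ℕ → A → A → ℝ
  fact : ℕ → A → (Fin H → A) → A
  g : A → Bool

namespace GT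

variable {σ : Type}

/-- The input sequence of symbols for input string `x`, with `$` appended. -/
def inputSeq (x : List σ) : Fin (x.length + 1) → (σ ⊕ Unit) := fun i =>
  if h : (i : ℕ) < x.length then Sum.inl (x.get ⟨i, h⟩) else Sum.inr ()

/-- Initial (layer-0) activation values `y⁰ᵢ = f(xᵢ, i, n)` (positions are `1`-based). -/
def y0 (T : GT σ) (x : List σ) : Fin (x.length + 1) → T.A := fun i =>
  T.f (inputSeq x i) ((i : ℕ) + 1) (x.length + 1)

/-- One layer of unique-hard-attention computation: each position attends, for each
head, to the leftmost position maximizing the attention score, and applies the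
activation function. Layers are numbered `1, …, K`. -/
noncomputable def layer (T : GT σ) {n : ℕ} (hn : 0 < n) (k : ℕ) (y : Fin n → T.A) :
    Fin n → T.A := fun i =>
  T.fact k (y i)
    (fun _h => y (leftmostArgmax hn (fun j => T.fatt k (_h : Fin T.H).val.succ (y i) (y j))))

/-- The activation values at layer `k` (layer `0` being the initial activations). -/
noncomputable def acts (T : GT σ) {n : ℕ} (hn : 0 < n) (y₀ : Fin n → T.A) :
    ℕ → Fin n → T.A
  | 0 => y₀
  | k + 1 => T.layer hn (k + 1) (T.acts hn y₀ k)

/-- `T` accepts `x` iff the output function applied to the final-layer activation at the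
last position of `x$` equals `1`. -/
noncomputable def accepts (T : GT σ) (x : List σ) : Prop :=
  T.g (T.acts (Nat.succ_pos _) (T.y0 x) T.K ⟨x.length, Nat.lt_succ_self _⟩) = true

/-- The language recognized by `T`: `L(T) = {x ∈ σ* : T accepts x$}`. -/
def lang (T : GT σ) : Set (List σ) := {x | T.accepts x}

end GT


/-! ### Auxiliary lemmas about `leftmostArgmax` -/

lemma leftmostArgmax_isMax {n : ℕ} (hn : 0 < n) (a : Fin n → ℝ) (l : Fin n) :
    a l ≤ a (leftmostArgmax hn a) := by
  classical
  have hmem := Finset.min'_mem (Finset.univ.filter (fun j => ∀ l, a l ≤ a j))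
    (by
      have : Nonempty (Fin n) := ⟨⟨0, hn⟩⟩
      obtain ⟨j, hj⟩ := Finite.exists_max a
      exact ⟨j, Finset.mem_filter.mpr ⟨Finset.mem_univ _, hj⟩⟩)
  have := (Finset.mem_filter.mp hmem).2
  exact this l

lemma leftmostArgmax_eq_of_strict {n : ℕ} (hn : 0 < n) (a : Fin n → ℝ) (j : Fin n)
    (h : ∀ l, l ≠ j → a l < a j) : leftmostArgmax hn a = j := by
  by_contra hne
  exact absurd (leftmostArgmax_isMax hn a j) (not_le.mpr (h _ hne))

/-! ### The Transformer recognizing palindromes -/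

open Classical in
/-- A 2-layer, 1-head GUHAT recognizing palindromes.  Activations record the symbol, the
(1-based) position, the length, and a boolean flag.  In layer 1, position `i` attends to
position `n - i` and records in the flag whether the two symbols agree (the flag is
forced to `true` at the `$` position).  In layer 2, each position attends to the
leftmost position whose flag is `false` (if any) and copies its flag. -/
noncomputable def palT (σ : Type) : GT σ where
  K := 2
  H := 1
  A := (σ ⊕ Unit) × ℕ × ℕ × Bool
  f := fun s i n => (s, i, n, true)
  fatt := fun k _ a b =>
    if k = 1 then (if a.2.1 + b.2.1 = a.2.2.1 then 1 else 0)
    else (if b.2.2.2 then 0 else 1)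
  fact := fun k a p =>
    if k = 1 then
      (a.1, a.2.1, a.2.2.1, if a.1 = Sum.inr () then true else decide (a.1 = (p 0).1))
    else (a.1, a.2.1, a.2.2.1, (p 0).2.2.2)
  g := fun a => a.2.2.2

section PalTFacts

variable {σ : Type} (x : List σ)

open Classical in
lemma palT_fact1_flag (a : (palT σ).A) (p : Fin (palT σ).H → (palT σ).A) :
    ((palT σ).fact 1 a p).2.2.2 =
      if a.1 = Sum.inr () then true else decide (a.1 = (p ⟨0, Nat.one_pos⟩).1) := rfl

lemma palT_fact2_flag (a : (palT σ).A) (p : Fin (palT σ).H → (palT σ).A) :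
    ((palT σ).fact 2 a p).2.2.2 = (p ⟨0, Nat.one_pos⟩).2.2.2 := rfl

lemma palT_y0_fst (i : Fin (x.length + 1)) :
    ((palT σ).y0 x i).1 = GT.inputSeq x i := rfl

open Classical in
/-- The flag of the layer-1 activation at position `i`. -/
noncomputable def palFlag (i : Fin (x.length + 1)) : Bool :=
  if h : (i : ℕ) < x.length then
    decide ((Sum.inl (x[(i : ℕ)]'h) : σ ⊕ Unit) =
      Sum.inl (x[x.length - 1 - (i : ℕ)]'(by omega)))
  else true

lemma palT_acts1 (i : Fin (x.length + 1)) :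
    ((palT σ).acts (Nat.succ_pos _) ((palT σ).y0 x) 1 i).2.2.2 = palFlag x i := by
  classical
  show ((palT σ).layer (Nat.succ_pos _) 1 ((palT σ).y0 x) i).2.2.2 = palFlag x i
  unfold GT.layer
  simp only [palT_fact1_flag]
  by_cases h : (i : ℕ) < x.length
  · have hlen1 : 1 ≤ x.length := by omega
    set j : Fin (x.length + 1) := ⟨x.length - 1 - (i : ℕ), by omega⟩ with hj
    have hargmax : ∀ hv : ℕ, leftmostArgmax (Nat.succ_pos _)
        (fun l => (palT σ).fatt 1 hv
          ((palT σ).y0 x i) ((palT σ).y0 x l)) = j := by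
      intro hv
      apply leftmostArgmax_eq_of_strict
      intro l hl
      have hsum : (i : ℕ) + 1 + ((j : ℕ) + 1) = x.length + 1 := by
        simp only [hj]
        omega
      have hsum' : (i : ℕ) + 1 + ((l : ℕ) + 1) ≠ x.length + 1 := by
        intro hc
        apply hl
        apply Fin.ext
        omega
      simp only [palT, GT.y0]
      simp [hsum, hsum']
    rw [hargmax]
    have hjlt : ((j : ℕ)) < x.length := by simp only [hj]; omega
    have hsymi : GT.inputSeq x i = Sum.inl (x[(i : ℕ)]'h) := dif_pos h
    have hsymj : GT.inputSeq x j = Sum.inl (x[(j : ℕ)]'hjlt) := dif_pos hjlt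
    rw [palT_y0_fst, palT_y0_fst, hsymi, hsymj]
    rw [if_neg (by simp)]
    simp only [palFlag, h, dif_pos]
    exact Bool.decide_congr Iff.rfl
  · have hsym : GT.inputSeq x i = Sum.inr () := by
      simp [GT.inputSeq, h]
    rw [palT_y0_fst, hsym, if_pos rfl]
    simp [palFlag, h]

lemma palT_accepts_iff :
    (palT σ).accepts x ↔ ∀ i : Fin (x.length + 1), palFlag x i = true := by
  classical
  unfold GT.accepts
  have hK : (palT σ).K = 2 := rfl
  rw [hK]
  show ((palT σ).layer (Nat.succ_pos _) 2 ((palT σ).acts (Nat.succ_pos _) ((palT σ).y0 x) 1)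
      ⟨x.length, Nat.lt_succ_self _⟩).2.2.2 = true ↔ _
  unfold GT.layer
  simp only [palT_fact2_flag]
  set y1 := (palT σ).acts (Nat.succ_pos _) ((palT σ).y0 x) 1 with hy1
  set i : Fin (x.length + 1) := ⟨x.length, Nat.lt_succ_self _⟩ with hi
  set a : Fin (x.length + 1) → ℝ :=
    fun l => (palT σ).fatt 2 ((⟨0, Nat.one_pos⟩ : Fin (palT σ).H)).val.succ (y1 i) (y1 l) with ha
  set m := leftmostArgmax (Nat.succ_pos _) a with hm
  have hscore : ∀ l, a l = if (y1 l).2.2.2 then 0 else 1 := fun l => rfl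
  constructor
  · intro hacc l
    have hyl : (y1 l).2.2.2 = palFlag x l := palT_acts1 x l
    rw [← hyl]
    by_contra hfl
    have hfl' : (y1 l).2.2.2 = false := by simpa using hfl
    have h1 : a l = 1 := by rw [hscore, hfl']; simp
    have hle := leftmostArgmax_isMax (Nat.succ_pos _) a l
    rw [← hm] at hle
    have hmfl : (y1 m).2.2.2 = true := hacc
    have h0 : a m = 0 := by rw [hscore, hmfl]; simp
    rw [h1, h0] at hle
    norm_num at hle
  · intro hall
    show (y1 m).2.2.2 = true
    rw [hy1, palT_acts1 x m]
    exact hall m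

end PalTFacts

/-- `PALINDROMES` over any finite alphabet `Σ` is recognizable by a generalized unique
hard attention Transformer (GUHAT) with 2 layers and 1 head. -/
theorem palindromes_in_GUHAT (σ : Type) [Fintype σ] :
    ∃ T : GT σ, T.K = 2 ∧ T.H = 1 ∧ T.lang = {x : List σ | x.reverse = x} := by
  classical
  refine ⟨palT σ, rfl, rfl, ?_⟩
  ext x
  simp only [GT.lang, Set.mem_setOf_eq]
  rw [palT_accepts_iff]
  constructor
  · intro hall
    apply List.ext_getElem (by simp)
    intro i h1 h2
    have hi : i < x.length := by simpa using h1
    have hfl := hall ⟨i, by omega⟩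
    simp only [palFlag, hi, dif_pos] at hfl
    have hx : x[i]'hi = x[x.length - 1 - i]'(by omega) :=
      Sum.inl.inj (of_decide_eq_true hfl)
    rw [List.getElem_reverse]
    exact hx.symm
  · intro hrev i
    simp only [palFlag]
    split
    · next h =>
      apply decide_eq_true
      have hrl : (i : ℕ) < x.reverse.length := by simpa using h
      have hg := List.getElem_reverse (l := x) (i := (i : ℕ)) hrl
      have hx : x[(i : ℕ)]'h = x.reverse[(i : ℕ)]'hrl := (List.getElem_of_eq hrev _).symm
      rw [hx, hg]
    · rfl
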